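/- Let X be an e-open compact metrizable space, Y compact metrizable, and φₙ, φ ∈ C(Y, X) with φₙ → φ uniformly on Y. Then φₙ is homotopic to φ for all sufficiently large n; in fact, there exist n and a continuous path ψ : [0, 1/n] → C(Y, X) with ψ(1/k) = φₖ for all k ≥ n and ψ(0) = φ. -/

import Mathlib

open Set Filter

/-- A map `f : Z → X` on a closed subspace `Z` of `Y` extends to a continuous map on `Y`. -/
def ExtendsTo {X Y : Type*} [TopologicalSpace X] [TopologicalSpace Y]
    (Z : Set Y) (f : C(Z, X)) : Prop :=
  ∃ g : C(Y, X), ∀ z : Z, g z.1 = f z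

/-- `X` is e-open. -/
def EOpen (X : Type*) [TopologicalSpace X] : Prop :=
  ∀ (Y : Type) [MetricSpace Y] [CompactSpace Y] (Z : Set Y), IsClosed Z →
    IsOpen {f : C(Z, X) | ExtendsTo Z f}

/-- The set {0} ∪ {1/k : k ≥ 1}. -/
def invSet : Set ℝ := insert 0 (Set.range fun k : ℕ => ((k : ℝ) + 1)⁻¹)

lemma isClosed_invSet : IsClosed invSet := by
  have h : Tendsto (fun k : ℕ => ((k : ℝ) + 1)⁻¹) atTop (nhds 0) := by
    have : Tendsto (fun n : ℕ => 1 / ((n : ℝ) + 1)) atTop (nhds 0) :=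
      tendsto_one_div_add_atTop_nhds_zero_nat
    simpa [one_div] using this
  exact h.isCompact_insert_range.isClosed

lemma inv_mem_invSet {k : ℕ} (hk : 1 ≤ k) : ((k : ℝ)⁻¹) ∈ invSet := by
  obtain ⟨m, rfl⟩ := Nat.exists_eq_add_of_le hk
  right
  exact ⟨m, by push_cast; ring_nf⟩

lemma zero_mem_invSet : (0 : ℝ) ∈ invSet := Or.inl rfl

/-- Points 1/k (k ≥ 1) are isolated in invSet with radius 1/k − 1/(k+1). -/
lemma invSet_isolated {k : ℕ} (hk : 1 ≤ k) {s : ℝ} (hs : s ∈ invSet)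
    (h : |s - (k : ℝ)⁻¹| < (k : ℝ)⁻¹ - ((k : ℝ) + 1)⁻¹) : s = (k : ℝ)⁻¹ := by
  have hk0 : (0 : ℝ) < k := by exact_mod_cast hk
  have hk10 : (0 : ℝ) < (k : ℝ) + 1 := by linarith
  rcases hs with rfl | ⟨m, rfl⟩
  · exfalso
    rw [zero_sub, abs_neg, abs_of_nonneg (le_of_lt (inv_pos.mpr hk0))] at h
    nlinarith [inv_pos.mpr hk10]
  · have hm0 : (0 : ℝ) < (m : ℝ) + 1 := by positivity
    rcases lt_trichotomy (m + 1) k with hlt | heq | hgt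
    · exfalso
      -- m+1 < k : s − 1/k ≥ 1/(m+1) − 1/k = (k−(m+1))/((m+1)k) ≥ 1/((m+1)k) ≥ 1/(k(k+1)) = r
      have hcast : (m : ℝ) + 1 + 1 ≤ (k : ℝ) := by exact_mod_cast hlt
      rw [abs_lt] at h
      have h2 := h.2
      have h1 : ((m:ℝ)+1)⁻¹ - (k:ℝ)⁻¹ < (k:ℝ)⁻¹ - ((k:ℝ)+1)⁻¹ := h2
      rw [inv_sub_inv (by positivity) (ne_of_gt hk0), inv_sub_inv (ne_of_gt hk0) (ne_of_gt hk10),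
        div_lt_div_iff₀ (by positivity) (by positivity)] at h1
      nlinarith [mul_le_mul_of_nonneg_right (show (m:ℝ)+1 ≤ (k:ℝ) - 1 by linarith) (le_of_lt hk0),
        mul_le_mul_of_nonneg_right (show (1:ℝ) ≤ (k:ℝ) - ((m:ℝ)+1) by linarith)
          (le_of_lt (mul_pos hk0 hk10))]
    · show ((m:ℝ)+1)⁻¹ = (k : ℝ)⁻¹
      rw [show ((m:ℝ)+1) = ((k:ℕ):ℝ) by exact_mod_cast heq]
    · exfalso
      -- m+1 > k: 1/(m+1) ≤ 1/(k+1), so 1/k − s ≥ r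
      have hcast : (k : ℝ) + 1 ≤ (m : ℝ) + 1 := by exact_mod_cast hgt
      have hle : ((m:ℝ)+1)⁻¹ ≤ ((k:ℝ)+1)⁻¹ := by
        apply inv_anti₀ hk10 hcast
      rw [abs_lt] at h
      linarith [h.1]

/-- The closed subset `({0} ∪ {1/k}) × Y` of `[0,1] × Y`. -/
def Zset (Y : Type) [MetricSpace Y] : Set (Icc (0:ℝ) 1 × Y) := {p | (p.1 : ℝ) ∈ invSet}

lemma isClosed_Zset (Y : Type) [MetricSpace Y] : IsClosed (Zset Y) :=
  isClosed_invSet.preimage (continuous_subtype_val.comp continuous_fst)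

open scoped Classical in
/-- The glued function on `Zset Y`. -/
noncomputable def gval {X Y : Type} [MetricSpace X] [MetricSpace Y]
    (φ : ℕ → C(Y, X)) (φl : C(Y, X)) (n : ℕ) (p : ↥(Zset Y)) : X :=
  if ((p.1.1 : ℝ)) = 0 then φl p.1.2 else φ (max n ⌊((p.1.1 : ℝ))⁻¹⌋₊) p.1.2

lemma gval_eq_of_inv {X Y : Type} [MetricSpace X] [MetricSpace Y]
    (φ : ℕ → C(Y, X)) (φl : C(Y, X)) (n m : ℕ) (p : ↥(Zset Y))
    (hp : (p.1.1 : ℝ) = ((m : ℝ) + 1)⁻¹) :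
    gval φ φl n p = φ (max n (m + 1)) p.1.2 := by
  have hm0 : (0:ℝ) < (m:ℝ) + 1 := by positivity
  have hne : (p.1.1 : ℝ) ≠ 0 := by rw [hp]; positivity
  rw [gval, if_neg hne, hp, inv_inv]
  congr 2
  rw [show ((m:ℝ) + 1) = ((m + 1 : ℕ) : ℝ) by push_cast; ring, Nat.floor_natCast]

lemma continuous_gval {X Y : Type} [MetricSpace X] [MetricSpace Y]
    (φ : ℕ → C(Y, X)) (φl : C(Y, X))
    (hconv : TendstoUniformly (fun n => ⇑(φ n)) (⇑φl) atTop) (n : ℕ) :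
    Continuous (gval (Y := Y) φ φl n) := by
  rw [continuous_iff_continuousAt]
  intro z
  have hcoord : Continuous (fun p : ↥(Zset Y) => (p.1.1 : ℝ)) :=
    continuous_subtype_val.comp (continuous_fst.comp continuous_subtype_val)
  rcases z.2 with h0 | ⟨m, hm⟩
  · -- at t = 0
    rw [Metric.continuousAt_iff]
    intro ε hε
    obtain ⟨M, hM⟩ := eventually_atTop.mp (Metric.tendstoUniformly_iff.mp hconv (ε/2) (half_pos hε))
    obtain ⟨δ₁, hδ₁, hφl⟩ := Metric.continuousAt_iff.mp (φl.continuous.continuousAt (x := z.1.2))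
      (ε/2) (half_pos hε)
    have hM1 : (0:ℝ) < ((M:ℝ) + 1)⁻¹ := by positivity
    refine ⟨min δ₁ ((M:ℝ)+1)⁻¹, lt_min hδ₁ hM1, fun {p} hp => ?_⟩
    rw [Subtype.dist_eq, Prod.dist_eq, Subtype.dist_eq] at hp
    rw [max_lt_iff] at hp
    obtain ⟨hp1, hp2⟩ := hp
    have hy : dist p.1.2 z.1.2 < δ₁ := lt_of_lt_of_le hp2 (min_le_left _ _)
    have hgz : gval φ φl n z = φl z.1.2 := by rw [gval, if_pos h0]
    rw [hgz]
    by_cases hq : (p.1.1 : ℝ) = 0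
    · rw [gval, if_pos hq]
      exact lt_of_lt_of_le (hφl hy) (by linarith)
    · rcases p.2 with h | ⟨m, hm⟩
      · exact absurd h hq
      · have hm' : (p.1.1 : ℝ) = ((m:ℝ)+1)⁻¹ := hm.symm
        rw [gval_eq_of_inv φ φl n m p hm']
        have hm0 : (0:ℝ) < (m:ℝ) + 1 := by positivity
        have htlt : ((m:ℝ)+1)⁻¹ < ((M:ℝ)+1)⁻¹ := by
          have : dist (p.1.1 : ℝ) (z.1.1 : ℝ) = ((m:ℝ)+1)⁻¹ := by
            rw [hm', h0, Real.dist_eq, sub_zero, abs_of_pos (by positivity)]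
          rw [this] at hp1
          exact lt_of_lt_of_le hp1 (min_le_right _ _)
        have hMm : M ≤ m + 1 := by
          have := (inv_lt_inv₀ hm0 (by positivity)).mp htlt
          have : (M:ℝ) < (m:ℝ) + 1 := by linarith
          exact_mod_cast le_of_lt (by exact_mod_cast this : (M:ℝ) < ((m+1:ℕ):ℝ))
        have hKM : M ≤ max n (m + 1) := le_trans hMm (le_max_right _ _)
        calc dist (φ (max n (m+1)) p.1.2) (φl z.1.2)
            ≤ dist (φ (max n (m+1)) p.1.2) (φl p.1.2) + dist (φl p.1.2) (φl z.1.2) :=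
              dist_triangle _ _ _
          _ < ε/2 + ε/2 := by
              refine add_lt_add ?_ (hφl hy)
              rw [dist_comm]
              exact hM _ hKM p.1.2
          _ = ε := by ring
  · -- at t = 1/(m+1) : isolated point
    have hm' : (z.1.1 : ℝ) = ((m:ℝ)+1)⁻¹ := hm.symm
    have hm0 : (0:ℝ) < (m:ℝ) + 1 := by positivity
    set r : ℝ := ((m:ℝ)+1)⁻¹ - ((m:ℝ)+1+1)⁻¹ with hr_def
    have hr : 0 < r := by
      rw [hr_def, sub_pos]
      exact inv_lt_inv₀ (by positivity) hm0 |>.mpr (by linarith)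
    have hU : {p : ↥(Zset Y) | |(p.1.1 : ℝ) - ((m:ℝ)+1)⁻¹| < r} ∈ nhds z := by
      have : IsOpen {p : ↥(Zset Y) | |(p.1.1 : ℝ) - ((m:ℝ)+1)⁻¹| < r} := by
        have : {p : ↥(Zset Y) | |(p.1.1 : ℝ) - ((m:ℝ)+1)⁻¹| < r} =
            (fun p : ↥(Zset Y) => (p.1.1 : ℝ)) ⁻¹' (Metric.ball (((m:ℝ)+1)⁻¹) r) := by
          ext p; simp [Metric.mem_ball, Real.dist_eq]
        rw [this]
        exact Metric.isOpen_ball.preimage hcoord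
      refine this.mem_nhds ?_
      simp only [Set.mem_setOf_eq, hm', sub_self, abs_zero]
      exact hr
    have heq : ∀ p ∈ {p : ↥(Zset Y) | |(p.1.1 : ℝ) - ((m:ℝ)+1)⁻¹| < r},
        gval φ φl n p = φ (max n (m+1)) p.1.2 := by
      intro p hp
      have hiso : (p.1.1 : ℝ) = ((m+1:ℕ) : ℝ)⁻¹ := by
        apply invSet_isolated (k := m+1) (Nat.le_add_left 1 m) p.2
        push_cast
        exact hp
      refine gval_eq_of_inv φ φl n m p ?_
      rw [hiso]; push_cast; ring
    have hev : (fun p => φ (max n (m+1)) p.1.2) =ᶠ[nhds z] gval (Y := Y) φ φl n :=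
      Filter.eventually_of_mem hU (fun p hp => (heq p hp).symm)
    exact ContinuousAt.congr
      ((φ (max n (m+1))).continuous.comp
        (continuous_snd.comp continuous_subtype_val)).continuousAt hev

lemma gval_tendsto {X Y : Type} [MetricSpace X] [MetricSpace Y]
    (φ : ℕ → C(Y, X)) (φl : C(Y, X))
    (hconv : TendstoUniformly (fun n => ⇑(φ n)) (⇑φl) atTop) :
    TendstoUniformly (fun n => gval (Y := Y) φ φl n) (fun p => φl p.1.2) atTop := by
  rw [Metric.tendstoUniformly_iff]
  intro ε hε
  obtain ⟨M, hM⟩ := eventually_atTop.mp (Metric.tendstoUniformly_iff.mp hconv ε hε)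
  filter_upwards [eventually_ge_atTop M] with n hn
  intro p
  by_cases hq : (p.1.1 : ℝ) = 0
  · rw [gval, if_pos hq]
    simpa using hε
  · rw [gval, if_neg hq]
    exact hM _ (le_trans hn (le_max_left _ _)) _

/-- If `X` is e-open and `φₙ → φ` uniformly on `Y`, then `φₙ` is homotopic to `φ` for all
sufficiently large `n`; in fact there is a continuous path `ψ : [0, 1/n] → C(Y, X)` with
`ψ(1/k) = φₖ` for `k ≥ n` and `ψ(0) = φ`. -/
theorem eOpen_homotopy {X : Type} [MetricSpace X] [CompactSpace X] (hX : EOpen X)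
    {Y : Type} [MetricSpace Y] [CompactSpace Y]
    (φ : ℕ → C(Y, X)) (φl : C(Y, X))
    (hconv : TendstoUniformly (fun n => ⇑(φ n)) (⇑φl) atTop) :
    (∀ᶠ n in atTop, (φ n).Homotopic φl) ∧
    ∃ n : ℕ, 0 < n ∧ ∃ ψ : C(Icc (0 : ℝ) ((n : ℝ)⁻¹), C(Y, X)),
      (∀ (k : ℕ) (hk : n ≤ k) (h : ((k : ℝ)⁻¹) ∈ Icc (0 : ℝ) ((n : ℝ)⁻¹)),
        ψ ⟨(k : ℝ)⁻¹, h⟩ = φ k) ∧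
      ∀ h0 : (0 : ℝ) ∈ Icc (0 : ℝ) ((n : ℝ)⁻¹), ψ ⟨0, h0⟩ = φl := by
  classical
  haveI : CompactSpace (↥(Zset Y)) :=
    isCompact_iff_compactSpace.mp ((isClosed_Zset Y).isCompact)
  set G : ℕ → C(↥(Zset Y), X) := fun n => ⟨gval φ φl n, continuous_gval φ φl hconv n⟩ with hG
  set Ginf : C(↥(Zset Y), X) := ⟨fun p => φl p.1.2,
    φl.continuous.comp (continuous_snd.comp continuous_subtype_val)⟩ with hGinf
  have htend : Tendsto G atTop (nhds Ginf) := by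
    rw [ContinuousMap.tendsto_iff_tendstoUniformly]
    exact gval_tendsto φ φl hconv
  have hopen := hX (↥(Icc (0:ℝ) 1) × Y) (Zset Y) (isClosed_Zset Y)
  have hmem : Ginf ∈ {f : C(↥(Zset Y), X) | ExtendsTo (Zset Y) f} :=
    ⟨⟨fun w => φl w.2, φl.continuous.comp continuous_snd⟩, fun z => rfl⟩
  have hev : ∀ᶠ n in atTop, ExtendsTo (Zset Y) (G n) := htend (hopen.mem_nhds hmem)
  obtain ⟨n₀, hext, hn₀1⟩ := (hev.and (eventually_ge_atTop 1)).exists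
  obtain ⟨Gext, hGext⟩ := hext
  have hn₀R : (1:ℝ) ≤ (n₀:ℝ) := by exact_mod_cast hn₀1
  have hinv_le : ((n₀:ℝ))⁻¹ ≤ 1 := inv_le_one_of_one_le₀ hn₀R
  -- key computation at points 1/k
  have key : ∀ (k : ℕ), n₀ ≤ k → ∀ (h1 : ((k:ℝ)⁻¹) ∈ Icc (0:ℝ) 1) (y : Y),
      Gext (⟨(k:ℝ)⁻¹, h1⟩, y) = φ k y := by
    intro k hk h1 y
    have hk1 : 1 ≤ k := le_trans hn₀1 hk
    obtain ⟨m, rfl⟩ := Nat.exists_eq_add_of_le hk1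
    have hzmem : ((⟨(((1+m:ℕ)):ℝ)⁻¹, h1⟩, y) : Icc (0:ℝ) 1 × Y) ∈ Zset Y :=
      inv_mem_invSet hk1
    rw [hGext ⟨_, hzmem⟩]
    show gval φ φl n₀ ⟨_, hzmem⟩ = _
    rw [gval_eq_of_inv φ φl n₀ m _ (by push_cast; ring)]
    have : max n₀ (m + 1) = 1 + m := by omega
    rw [this]
  have key' : ∀ (t : ℝ) (ht : t ∈ Icc (0:ℝ) 1) (y : Y) (k : ℕ), n₀ ≤ k →
      t = (k:ℝ)⁻¹ → Gext (⟨t, ht⟩, y) = φ k y := by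
    intro t ht y k hk hteq; subst hteq; exact key k hk ht y
  have key0 : ∀ (t : ℝ) (ht : t ∈ Icc (0:ℝ) 1) (y : Y), t = 0 →
      Gext (⟨t, ht⟩, y) = φl y := by
    intro t ht y hteq; subst hteq
    have hzmem : ((⟨(0:ℝ), ht⟩, y) : Icc (0:ℝ) 1 × Y) ∈ Zset Y := zero_mem_invSet
    rw [hGext ⟨_, hzmem⟩]
    show gval φ φl n₀ ⟨_, hzmem⟩ = _
    rw [gval, if_pos rfl]
  constructor
  · -- eventual homotopy
    filter_upwards [eventually_ge_atTop n₀] with k hk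
    have hk1 : 1 ≤ k := le_trans hn₀1 hk
    have hkR : (1:ℝ) ≤ (k:ℝ) := by exact_mod_cast hk1
    have hk0 : (0:ℝ) < (k:ℝ) := by linarith
    have hkinv1 : ((k:ℝ))⁻¹ ≤ 1 := inv_le_one_of_one_le₀ hkR
    have hmemI : ∀ s : unitInterval, (1 - (s:ℝ)) * (k:ℝ)⁻¹ ∈ Icc (0:ℝ) 1 := by
      intro s
      have h1 : (0:ℝ) ≤ 1 - (s:ℝ) := by linarith [s.2.2]
      have h2 : (1 - (s:ℝ)) ≤ 1 := by linarith [s.2.1]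
      constructor
      · positivity
      · calc (1 - (s:ℝ)) * (k:ℝ)⁻¹ ≤ 1 * 1 :=
              mul_le_mul h2 hkinv1 (by positivity) (by norm_num)
          _ = 1 := by ring
    refine ⟨⟨⟨fun q => Gext (⟨(1 - (q.1:ℝ)) * (k:ℝ)⁻¹, hmemI q.1⟩, q.2), ?_⟩, ?_, ?_⟩⟩
    · refine Gext.continuous.comp (Continuous.prodMk (Continuous.subtype_mk ?_ _)
        continuous_snd)
      exact (continuous_const.sub
        (continuous_subtype_val.comp continuous_fst)).mul continuous_const
    · intro y
      refine key' _ _ y k hk ?_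
      norm_num
    · intro y
      refine key0 _ _ y ?_
      norm_num
  · refine ⟨n₀, hn₀1, ?_⟩
    set e : C(↥(Icc (0:ℝ) ((n₀:ℝ)⁻¹)) × Y, X) :=
      ⟨fun q => Gext (⟨q.1.1, ⟨q.1.2.1, le_trans q.1.2.2 hinv_le⟩⟩, q.2), by
        refine Gext.continuous.comp (Continuous.prodMk (Continuous.subtype_mk ?_ _)
          continuous_snd)
        exact continuous_subtype_val.comp continuous_fst⟩ with he
    refine ⟨e.curry, ?_, ?_⟩
    · intro k hk h
      ext y
      exact key' _ _ y k hk rfl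
    · intro h0
      ext y
      exact key0 _ _ y rfl
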